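/- arXiv:quant-ph/0407255 — 2 statements merged into one kernel-verified Lean document; each statement's English description precedes it below -/
import Mathlib

section
/- Let G be a finite simple graph and let p : V → ℝ be arbitrary. Write P = 2^{−|V|} • ∏_{u ∈ V} (1 + K_u) (the cluster-state projector) and, for S ⊆ V, Z_S = ∏_{u ∈ S} Z_u. Then the mixture of independent local Z-errors applied to P reproduces a product form: ∑_{S ⊆ V} (∏_{u ∈ S} p(u)) (∏_{u ∉ S} (1 − p(u))) • Z_S * P * Z_S = 2^{−|V|} • ∏_{u ∈ V} (1 + (1 − 2 p(u)) • K_u). In particular, for constant p the thermal cluster state 2^{−|V|} ∏_u (1 + (1−2p) K_u) is obtained from the pure cluster state by flipping each qubit with Z independently with probability p. -/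
open Matrix

set_option linter.unusedSectionVars false

noncomputable section

namespace ClusterState


/-- The single-qubit Pauli `X` matrix. -/
def PX : Matrix (Fin 2) (Fin 2) ℂ := !![0, 1; 1, 0]

/-- The single-qubit Pauli `Z` matrix. -/
def PZ : Matrix (Fin 2) (Fin 2) ℂ := !![1, 0; 0, -1]

variable {V : Type*} [Fintype V] [DecidableEq V]

/-- The one-qubit operator `M` acting on the tensor factor `u` of the
`|V|`-qubit space `(V → Fin 2)`, and the identity on all other factors. -/
def oneSite (u : V) (M : Matrix (Fin 2) (Fin 2) ℂ) :
    Matrix (V → Fin 2) (V → Fin 2) ℂ :=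
  Matrix.of fun s t => if ∀ v, v ≠ u → s v = t v then M (s u) (t u) else 0

/-- Pauli `X` acting on tensor factor `u`. -/
def XAt (u : V) : Matrix (V → Fin 2) (V → Fin 2) ℂ := oneSite u PX

/-- Pauli `Z` acting on tensor factor `u`. -/
def ZAt (u : V) : Matrix (V → Fin 2) (V → Fin 2) ℂ := oneSite u PZ

lemma fin2_cases : ∀ a : Fin 2, a = 0 ∨ a = 1 := by decide

lemma ZAt_eq_diagonal (u : V) :
    ZAt u = Matrix.diagonal fun s => if s u = 1 then (-1 : ℂ) else 1 := by
  funext s t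
  simp only [ZAt, oneSite, Matrix.of_apply]
  by_cases hst : s = t
  · subst hst
    rw [Matrix.diagonal_apply_eq, if_pos fun v _ => rfl]
    rcases fin2_cases (s u) with h | h <;> rw [h] <;> norm_num [PZ]
  · rw [Matrix.diagonal_apply_ne _ hst]
    by_cases h : ∀ v, v ≠ u → s v = t v
    · rw [if_pos h]
      have hsu : s u ≠ t u := by
        intro he
        exact hst (funext fun v => by
          by_cases hv : v = u
          · rw [hv]; exact he
          · exact h v hv)
      rcases fin2_cases (s u) with h1 | h1 <;> rcases fin2_cases (t u) with h2 | h2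
      · exact absurd (h1.trans h2.symm) hsu
      · rw [h1, h2]; norm_num [PZ]
      · rw [h1, h2]; norm_num [PZ]
      · exact absurd (h1.trans h2.symm) hsu
    · rw [if_neg h]

lemma ZAt_commute (u w : V) : Commute (ZAt u) (ZAt w) := by
  have : ZAt u * ZAt w = ZAt w * ZAt u := by
    rw [ZAt_eq_diagonal, ZAt_eq_diagonal, Matrix.diagonal_mul_diagonal,
      Matrix.diagonal_mul_diagonal]
    exact congrArg Matrix.diagonal (mul_comm _ _)
  exact this

/-- The product `∏_{u ∈ S} Z_u` of Pauli `Z` operators over a finite set of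
sites (all factors commute). -/
def Zprod (S : Finset V) : Matrix (V → Fin 2) (V → Fin 2) ℂ :=
  S.noncommProd ZAt fun u _ w _ _ => ZAt_commute u w

/-- Flip the bit at site `u`. -/
def flip (u : V) (s : V → Fin 2) : V → Fin 2 := Function.update s u (s u + 1)

lemma flip_apply_same (u : V) (s : V → Fin 2) : flip u s u = s u + 1 := by
  unfold flip; exact Function.update_self u (s u + 1) s

lemma flip_apply_ne (u v : V) (s : V → Fin 2) (h : v ≠ u) : flip u s v = s v := by
  unfold flip; exact Function.update_of_ne h (s u + 1) s

lemma XAt_apply (u : V) (s t : V → Fin 2) :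
    XAt u s t = if t = flip u s then 1 else 0 := by
  simp only [XAt, oneSite, Matrix.of_apply]
  by_cases ht : t = flip u s
  · have hcond : ∀ v, v ≠ u → s v = t v := fun v hv => by
      rw [ht, flip_apply_ne u v s hv]
    rw [if_pos hcond, if_pos ht, ht, flip_apply_same]
    rcases fin2_cases (s u) with h | h <;> rw [h]
    · have e : (0 : Fin 2) + 1 = 1 := rfl
      rw [e]; norm_num [PX]
    · have e : (1 : Fin 2) + 1 = 0 := rfl
      rw [e]; norm_num [PX]
  · rw [if_neg ht]
    by_cases h : ∀ v, v ≠ u → s v = t v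
    · rw [if_pos h]
      have htu : t u ≠ s u + 1 := by
        intro he
        apply ht
        funext v
        by_cases hv : v = u
        · rw [hv, he, flip_apply_same]
        · rw [flip_apply_ne u v s hv]; exact (h v hv).symm
      have hts : t u = s u := by
        have key : ∀ a b : Fin 2, b ≠ a + 1 → b = a := by decide
        exact key (s u) (t u) htu
      rw [hts]
      rcases fin2_cases (s u) with h1 | h1 <;> rw [h1] <;> norm_num [PX]
    · rw [if_neg h]

lemma XAt_mul_apply (u : V) (A : Matrix (V → Fin 2) (V → Fin 2) ℂ)
    (s t : V → Fin 2) : (XAt u * A) s t = A (flip u s) t := by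
  rw [Matrix.mul_apply, Finset.sum_eq_single (flip u s)]
  · rw [XAt_apply, if_pos rfl, one_mul]
  · intro r _ hr
    rw [XAt_apply, if_neg hr, zero_mul]
  · intro h; exact absurd (Finset.mem_univ _) h

lemma flip_flip (u : V) (s : V → Fin 2) : flip u (flip u s) = s := by
  funext v
  by_cases hv : v = u
  · rw [hv, flip_apply_same, flip_apply_same]
    have key : ∀ a : Fin 2, a + 1 + 1 = a := by decide
    exact key (s u)
  · rw [flip_apply_ne _ _ _ hv, flip_apply_ne _ _ _ hv]

lemma mul_XAt_apply (u : V) (A : Matrix (V → Fin 2) (V → Fin 2) ℂ)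
    (s t : V → Fin 2) : (A * XAt u) s t = A s (flip u t) := by
  rw [Matrix.mul_apply, Finset.sum_eq_single (flip u t)]
  · rw [XAt_apply, if_pos (flip_flip u t).symm, mul_one]
  · intro r _ hr
    rw [XAt_apply, if_neg, mul_zero]
    intro he
    exact hr (by rw [he, flip_flip])
  · intro h; exact absurd (Finset.mem_univ _) h

lemma flip_comm (u w : V) (s : V → Fin 2) :
    flip u (flip w s) = flip w (flip u s) := by
  rcases eq_or_ne u w with rfl | h
  · rfl
  · funext v
    by_cases hu : v = u
    · rw [hu, flip_apply_same, flip_apply_ne w u s h,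
        flip_apply_ne w u (flip u s) h, flip_apply_same]
    · by_cases hw : v = w
      · rw [hw, flip_apply_ne u w (flip w s) (Ne.symm h), flip_apply_same,
          flip_apply_same, flip_apply_ne u w s (Ne.symm h)]
      · rw [flip_apply_ne u v (flip w s) hu, flip_apply_ne w v s hw,
          flip_apply_ne w v (flip u s) hw, flip_apply_ne u v s hu]

lemma XAt_commute (u w : V) : Commute (XAt u) (XAt w) := by
  have : XAt u * XAt w = XAt w * XAt u := by
    funext s t
    rw [XAt_mul_apply, XAt_mul_apply, XAt_apply, XAt_apply, flip_comm w u s]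
  exact this

/-- The product `∏_{u ∈ S} X_u` of Pauli `X` operators over a finite set of
sites (all factors commute). -/
def Xprod (S : Finset V) : Matrix (V → Fin 2) (V → Fin 2) ℂ :=
  S.noncommProd XAt fun u _ w _ _ => XAt_commute u w

/-- The cluster-state stabilizer operator `K_u = X_u * ∏_{v ∈ N(u)} Z_v`. -/
def K (G : SimpleGraph V) [DecidableRel G.Adj] (u : V) :
    Matrix (V → Fin 2) (V → Fin 2) ℂ :=
  XAt u * Zprod (G.neighborFinset u)

/-- Product of a family of pairwise commuting elements over a finite set. -/
def cprod {α M : Type*} [Monoid M] (S : Finset α) (f : α → M)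
    (h : ∀ u ∈ S, ∀ w ∈ S, Commute (f u) (f w)) : M :=
  S.noncommProd f fun u hu w hw _ => h u hu w hw


/-! ### Auxiliary lemmas -/

/-- The diagonal entry of `Zprod S`. -/
def dsign (S : Finset V) (s : V → Fin 2) : ℂ :=
  ∏ u ∈ S, (if s u = 1 then (-1 : ℂ) else 1)

lemma Zprod_eq_diagonal (S : Finset V) : Zprod S = Matrix.diagonal (dsign S) := by
  classical
  induction S using Finset.induction_on with
  | empty =>
      rw [show Zprod (∅ : Finset V) = 1 from Finset.noncommProd_empty _ _,
        show dsign (∅ : Finset V) = fun _ => 1 from funext fun s => Finset.prod_empty,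
        Matrix.diagonal_one]
  | insert _ _ ha ih =>
      rename_i a S
      rw [show Zprod (insert a S) = ZAt a * Zprod S from
        Finset.noncommProd_insert_of_notMem _ _ _ _ ha]
      show ZAt a * Zprod S = _
      rw [ih, ZAt_eq_diagonal, Matrix.diagonal_mul_diagonal]
      refine congrArg Matrix.diagonal (funext fun s => ?_)
      simp only [dsign, Finset.prod_insert ha]

lemma dsign_mul_self (S : Finset V) (s : V → Fin 2) : dsign S s * dsign S s = 1 := by
  rw [dsign, ← Finset.prod_mul_distrib]
  apply Finset.prod_eq_one
  intro u _
  split_ifs <;> norm_num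

lemma Zprod_mul_self (S : Finset V) : Zprod S * Zprod S = 1 := by
  rw [Zprod_eq_diagonal, Matrix.diagonal_mul_diagonal, ← Matrix.diagonal_one]
  exact congrArg Matrix.diagonal (funext fun s => dsign_mul_self S s)

lemma Zprod_commute' (S T : Finset V) : Zprod S * Zprod T = Zprod T * Zprod S := by
  rw [Zprod_eq_diagonal, Zprod_eq_diagonal, Matrix.diagonal_mul_diagonal,
    Matrix.diagonal_mul_diagonal]
  exact congrArg Matrix.diagonal (funext fun s => mul_comm _ _)

lemma dsign_flip (S : Finset V) (u : V) (s : V → Fin 2) :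
    dsign S (flip u s) = (if u ∈ S then (-1 : ℂ) else 1) * dsign S s := by
  by_cases hu : u ∈ S
  · rw [if_pos hu, dsign, dsign, ← Finset.mul_prod_erase _ _ hu, ← Finset.mul_prod_erase _ _ hu]
    have h1 : ∏ w ∈ S.erase u, (if flip u s w = 1 then (-1 : ℂ) else 1)
        = ∏ w ∈ S.erase u, (if s w = 1 then (-1 : ℂ) else 1) := by
      refine Finset.prod_congr rfl fun w hw => ?_
      rw [flip_apply_ne u w s (Finset.ne_of_mem_erase hw)]
    rw [h1, flip_apply_same, ← mul_assoc]
    congr 1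
    rcases fin2_cases (s u) with h | h <;> rw [h]
    · have e : (0 : Fin 2) + 1 = 1 := rfl
      rw [e]; norm_num
    · have e : (1 : Fin 2) + 1 = 0 := rfl
      rw [e]; norm_num
  · rw [if_neg hu, one_mul, dsign, dsign]
    refine Finset.prod_congr rfl fun w hw => ?_
    rw [flip_apply_ne u w s (fun e => hu (e ▸ hw))]

lemma Zprod_mul_XAt (S : Finset V) (u : V) :
    Zprod S * XAt u = (if u ∈ S then (-1 : ℂ) else 1) • (XAt u * Zprod S) := by
  rw [Zprod_eq_diagonal]
  funext s t
  rw [Matrix.smul_apply, Matrix.diagonal_mul, Matrix.mul_diagonal, XAt_apply]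
  by_cases ht : t = flip u s
  · rw [if_pos ht, mul_one, one_mul, ht, dsign_flip]
    split_ifs <;> simp
  · rw [if_neg ht, mul_zero, zero_mul, smul_zero]

lemma conj_K (G : SimpleGraph V) [DecidableRel G.Adj] (S : Finset V) (u : V) :
    Zprod S * K G u * Zprod S = (if u ∈ S then (-1 : ℂ) else 1) • K G u := by
  rw [K]
  calc Zprod S * (XAt u * Zprod (G.neighborFinset u)) * Zprod S
      = (Zprod S * XAt u) * (Zprod (G.neighborFinset u) * Zprod S) := by
        simp only [mul_assoc]
    _ = ((if u ∈ S then (-1 : ℂ) else 1) • (XAt u * Zprod S)) *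
          (Zprod (G.neighborFinset u) * Zprod S) := by rw [Zprod_mul_XAt]
    _ = (if u ∈ S then (-1 : ℂ) else 1) •
          (XAt u * (Zprod S * Zprod (G.neighborFinset u) * Zprod S)) := by
        simp only [smul_mul_assoc, mul_assoc]
    _ = (if u ∈ S then (-1 : ℂ) else 1) •
          (XAt u * (Zprod (G.neighborFinset u) * (Zprod S * Zprod S))) := by
        rw [Zprod_commute', mul_assoc]
    _ = (if u ∈ S then (-1 : ℂ) else 1) • (XAt u * Zprod (G.neighborFinset u)) := by
        rw [Zprod_mul_self, mul_one]

/-- Conjugation by `Zprod S` as a monoid hom. -/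
def conjHom (S : Finset V) :
    Matrix (V → Fin 2) (V → Fin 2) ℂ →* Matrix (V → Fin 2) (V → Fin 2) ℂ where
  toFun A := Zprod S * A * Zprod S
  map_one' := by
    show Zprod S * 1 * Zprod S = 1
    rw [mul_one, Zprod_mul_self]
  map_mul' A B := by
    show Zprod S * (A * B) * Zprod S = (Zprod S * A * Zprod S) * (Zprod S * B * Zprod S)
    simp only [mul_assoc]
    rw [← mul_assoc (Zprod S) (Zprod S), Zprod_mul_self, one_mul]

lemma prod_smul_aux {A : Type*} [CommRing A] [Algebra ℂ A]
    (s : Finset V) (c : V → ℂ) (f : V → A) :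
    ∏ u ∈ s, (c u • f u) = (∏ u ∈ s, c u) • ∏ u ∈ s, f u := by
  classical
  induction s using Finset.induction_on with
  | empty => simp
  | insert _ _ ha ih =>
      rename_i a s
      rw [Finset.prod_insert ha, Finset.prod_insert ha, Finset.prod_insert ha, ih,
        smul_mul_smul_comm]

/-- The key purely algebraic identity, in a commutative `ℂ`-algebra. -/
lemma key_comm {A : Type*} [CommRing A] [Algebra ℂ A] (k : V → A) (q : V → ℂ) :
    ∑ S : Finset V, ((∏ u ∈ S, q u) * ∏ u ∈ Sᶜ, (1 - q u)) •
        ∏ u, (1 + (if u ∈ S then (-1 : ℂ) else 1) • k u)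
      = ∏ u, (1 + (1 - 2 * q u) • k u) := by
  classical
  have step : ∀ u : V, (1 : A) + (1 - 2 * q u) • k u
      = q u • (1 - k u) + (1 - q u) • (1 + k u) := by
    intro u
    module
  rw [Finset.prod_congr rfl fun u _ => step u, Finset.prod_add, ← Finset.powerset_univ]
  refine Finset.sum_congr rfl fun S _ => ?_
  rw [show Finset.univ \ S = Sᶜ from (Finset.compl_eq_univ_sdiff S).symm,
    prod_smul_aux, prod_smul_aux, smul_mul_smul_comm]
  congr 1
  rw [← Finset.prod_mul_prod_compl S (fun u => 1 + (if u ∈ S then (-1 : ℂ) else 1) • k u)]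
  congr 1
  · refine Finset.prod_congr rfl fun u hu => ?_
    rw [if_pos hu, neg_smul, one_smul, sub_eq_add_neg]
  · refine Finset.prod_congr rfl fun u hu => ?_
    rw [if_neg (Finset.mem_compl.mp hu), one_smul]

lemma noncommProd_univ_congr {M₀ : Type*} [Monoid M₀] {f g : V → M₀}
    (h : ∀ u, f u = g u) (hf) (hg) :
    Finset.univ.noncommProd f hf = Finset.univ.noncommProd g hg := by
  have he : f = g := funext h
  subst he
  rfl

lemma real_smul_eq (r : ℝ) (M : Matrix (V → Fin 2) (V → Fin 2) ℂ) :
    r • M = (r : ℂ) • M :=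
  (algebraMap_smul ℂ r M).symm

lemma conj_one_add_K (G : SimpleGraph V) [DecidableRel G.Adj] (S : Finset V) (u : V) :
    Zprod S * (1 + K G u) * Zprod S
      = 1 + (if u ∈ S then (-1 : ℂ) else 1) • K G u := by
  rw [mul_add, mul_one, add_mul, Zprod_mul_self, conj_K]

/-- applying independent local `Z`-errors with probabilities `p(u)`
to the cluster-state projector `P = 2^{−|V|} ∏_u (1 + K_u)` yields
`2^{−|V|} ∏_u (1 + (1 − 2 p(u)) K_u)`. -/
theorem local_Z_errors_on_cluster_state
    {V : Type*} [Fintype V] [DecidableEq V]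
    (G : SimpleGraph V) [DecidableRel G.Adj] (p : V → ℝ)
    (h1 : ∀ u w : V,
      Commute ((1 : Matrix (V → Fin 2) (V → Fin 2) ℂ) + K G u) (1 + K G w))
    (h2 : ∀ u w : V,
      Commute ((1 : Matrix (V → Fin 2) (V → Fin 2) ℂ) + (1 - 2 * p u) • K G u)
        (1 + (1 - 2 * p w) • K G w))
    (P : Matrix (V → Fin 2) (V → Fin 2) ℂ)
    (hP : P = ((2 : ℂ) ^ Fintype.card V)⁻¹ •
      cprod Finset.univ (fun u => 1 + K G u) (fun u _ w _ => h1 u w)) :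
    ∑ S : Finset V, ((∏ u ∈ S, p u) * ∏ u ∈ Sᶜ, (1 - p u)) • (Zprod S * P * Zprod S)
      = ((2 : ℂ) ^ Fintype.card V)⁻¹ •
          cprod Finset.univ (fun u => 1 + (1 - 2 * p u) • K G u)
            (fun u _ w _ => h2 u w) := by
  classical
  have hK : ∀ u w : V, Commute (K G u) (K G w) := by
    intro u w
    have h1' : Commute ((1 + K G u) - 1) (1 + K G w) :=
      (h1 u w).sub_left (Commute.one_left _)
    have h2' : Commute ((1 + K G u) - 1) ((1 + K G w) - 1) :=
      h1'.sub_right (Commute.one_right _)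
    simpa using h2'
  have hC : ∀ (c d : ℂ) (u w : V),
      Commute ((1 : Matrix (V → Fin 2) (V → Fin 2) ℂ) + c • K G u) (1 + d • K G w) :=
    fun c d u w =>
      Commute.add_left (Commute.one_left _)
        (Commute.add_right (Commute.one_right _) (((hK u w).smul_left c).smul_right d))
  have hcomm : ∀ a ∈ Set.range (K G), ∀ b ∈ Set.range (K G), a * b = b * a := by
    rintro a ⟨u, rfl⟩ b ⟨w, rfl⟩
    exact hK u w
  letI : CommRing ↥(Algebra.adjoin ℂ (Set.range (K G))) :=
    Algebra.adjoinCommRingOfComm ℂ hcomm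
  set ι := (Algebra.adjoin ℂ (Set.range (K G))).val with hιdef
  set k : V → ↥(Algebra.adjoin ℂ (Set.range (K G))) := fun u =>
    ⟨K G u, Algebra.subset_adjoin ⟨u, rfl⟩⟩ with hkdef
  -- the image under `ι` of a product of `1 + c u • k u` factors
  have e1 : ∀ (c : V → ℂ),
      ι (∏ u, (1 + c u • k u))
        = Finset.univ.noncommProd (fun u => 1 + c u • K G u)
            (fun u _ w _ _ => hC (c u) (c w) u w) := by
    intro c
    rw [← Finset.noncommProd_eq_prod]
    refine (Finset.map_noncommProd _ _ _ ι).trans ?_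
    refine noncommProd_univ_congr (fun u => ?_) _ _
    rw [map_add, _root_.map_one, _root_.map_smul]
    rfl
  -- conjugation of the cluster-state product by `Zprod S`
  have e2 : ∀ S : Finset V,
      Zprod S * cprod Finset.univ (fun u => 1 + K G u) (fun u _ w _ => h1 u w) * Zprod S
        = Finset.univ.noncommProd
            (fun u => 1 + (if u ∈ S then (-1 : ℂ) else 1) • K G u)
            (fun u _ w _ _ => hC _ _ u w) := by
    intro S
    calc Zprod S * cprod Finset.univ (fun u => 1 + K G u) (fun u _ w _ => h1 u w) * Zprod S
        = conjHom S (Finset.univ.noncommProd (fun u => 1 + K G u)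
            (fun u _ w _ _ => h1 u w)) := rfl
      _ = Finset.univ.noncommProd (fun u => conjHom S (1 + K G u))
            (fun u hu w hw h => ((fun u _ w _ _ => h1 u w : _) u hu w hw h).map
              (conjHom S)) := Finset.map_noncommProd _ _ _ _
      _ = Finset.univ.noncommProd
            (fun u => 1 + (if u ∈ S then (-1 : ℂ) else 1) • K G u)
            (fun u _ w _ _ => hC _ _ u w) :=
          noncommProd_univ_congr (fun u => conj_one_add_K G S u) _ _
  have hL : ∀ S : Finset V,
      Zprod S * P * Zprod S
        = ((2 : ℂ) ^ Fintype.card V)⁻¹ •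
            ι (∏ u, (1 + (if u ∈ S then (-1 : ℂ) else 1) • k u)) := by
    intro S
    rw [hP, mul_smul_comm, smul_mul_assoc, e2 S, e1 (fun u => if u ∈ S then (-1 : ℂ) else 1)]
  have hcast : ∀ S : Finset V,
      (((∏ u ∈ S, p u) * ∏ u ∈ Sᶜ, (1 - p u) : ℝ) : ℂ)
        = (∏ u ∈ S, ((p u : ℂ))) * ∏ u ∈ Sᶜ, (1 - (p u : ℂ)) := by
    intro S
    push_cast
    ring
  calc ∑ S : Finset V, ((∏ u ∈ S, p u) * ∏ u ∈ Sᶜ, (1 - p u)) • (Zprod S * P * Zprod S)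
      = ∑ S : Finset V, ((2 : ℂ) ^ Fintype.card V)⁻¹ •
          (((∏ u ∈ S, ((p u : ℂ))) * ∏ u ∈ Sᶜ, (1 - (p u : ℂ))) •
            ι (∏ u, (1 + (if u ∈ S then (-1 : ℂ) else 1) • k u))) := by
        refine Finset.sum_congr rfl fun S _ => ?_
        rw [hL S, real_smul_eq, hcast S, smul_comm]
    _ = ((2 : ℂ) ^ Fintype.card V)⁻¹ •
          ∑ S : Finset V, ((∏ u ∈ S, ((p u : ℂ))) * ∏ u ∈ Sᶜ, (1 - (p u : ℂ))) •
            ι (∏ u, (1 + (if u ∈ S then (-1 : ℂ) else 1) • k u)) := by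
        rw [Finset.smul_sum]
    _ = ((2 : ℂ) ^ Fintype.card V)⁻¹ •
          ι (∑ S : Finset V, ((∏ u ∈ S, ((p u : ℂ))) * ∏ u ∈ Sᶜ, (1 - (p u : ℂ))) •
            ∏ u, (1 + (if u ∈ S then (-1 : ℂ) else 1) • k u)) := by
        rw [map_sum]
        simp only [_root_.map_smul]
    _ = ((2 : ℂ) ^ Fintype.card V)⁻¹ •
          ι (∏ u, (1 + (1 - 2 * (p u : ℂ)) • k u)) := by
        rw [key_comm k (fun u => (p u : ℂ))]
    _ = ((2 : ℂ) ^ Fintype.card V)⁻¹ •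
          cprod Finset.univ (fun u => 1 + (1 - 2 * p u) • K G u)
            (fun u _ w _ => h2 u w) := by
        rw [e1 (fun u => 1 - 2 * (p u : ℂ))]
        congr 1
        refine (noncommProd_univ_congr (fun u => ?_) _ _)
        rw [real_smul_eq]
        push_cast
        rfl

end ClusterState
end
end

section
/- Let G be a finite simple graph with weights ω : E → ℝ. Let D = {(u,v) : u adjacent to v} be the set of darts of G (virtual qubits), and define the thermal valence-bond-solid state on the 2|E| virtual qubits as ρ_VBS = ∏_{{u,v} ∈ E} (1/4)(1 + ω({u,v}) X_{(u,v)} Z_{(v,u)})(1 + ω({u,v}) Z_{(u,v)} X_{(v,u)}). Let W be the matrix from the physical space (V → Fin 2) to the virtual space (D → Fin 2) given by W(s, b) = 1 if for every dart (u,v), s(u,v) = b(u), and 0 otherwise (i.e. W = ⨂_u W_u maps each physical qubit u to the GHZ-type embedding of its domain of virtual qubits). Then Wᴴ * ρ_VBS * W = 4^{−|E|} • ∏_{u ∈ V} (1 + η_u • K_u), where η_u = ∏_{v ∈ N(u)} ω({u,v}) and K_u acts on the physical space. -/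
open Matrix

set_option linter.unusedSectionVars false

noncomputable section

namespace ClusterState


variable {V : Type*} [Fintype V] [DecidableEq V]

variable {V : Type*} [Fintype V] [DecidableEq V]

lemma XAt_mul_ZAt_of_ne {a b : V} (h : a ≠ b) : XAt a * ZAt b = ZAt b * XAt a := by
  funext s t
  rw [ZAt_eq_diagonal b]
  rw [Matrix.mul_diagonal, Matrix.diagonal_mul, XAt_apply]
  by_cases ht : t = flip a s
  · rw [if_pos ht, one_mul, mul_one, ht, flip_apply_ne a b s (Ne.symm h)]
  · rw [if_neg ht, zero_mul, mul_zero]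

lemma XAt_mul_ZAt_same (u : V) : XAt u * ZAt u = -(ZAt u * XAt u) := by
  funext s t
  rw [ZAt_eq_diagonal u]
  rw [Matrix.neg_apply, Matrix.mul_diagonal, Matrix.diagonal_mul, XAt_apply]
  by_cases ht : t = flip u s
  · rw [if_pos ht, one_mul, mul_one, ht, flip_apply_same]
    rcases fin2_cases (s u) with h | h <;> rw [h]
    · have e : (0 : Fin 2) + 1 = 1 := rfl
      rw [e, if_pos rfl, if_neg (by decide : ¬((0:Fin 2) = 1))]
    · have e : (1 : Fin 2) + 1 = 0 := rfl
      rw [e, if_neg (by decide : ¬((0:Fin 2) = 1)), if_pos rfl]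
      norm_num
  · rw [if_neg ht, zero_mul, mul_zero, neg_zero]

lemma ZAt_mul_XAt_same (u : V) : ZAt u * XAt u = -(XAt u * ZAt u) := by
  rw [XAt_mul_ZAt_same u, neg_neg]

lemma XZ_ZX_commute {a b : V} (h : a ≠ b) :
    (XAt a * ZAt b) * (ZAt a * XAt b) = (ZAt a * XAt b) * (XAt a * ZAt b) := by
  have hL : (XAt a * ZAt b) * (ZAt a * XAt b)
      = -(XAt a * (ZAt a * (XAt b * ZAt b))) := by
    calc (XAt a * ZAt b) * (ZAt a * XAt b)
        = XAt a * (ZAt b * (ZAt a * XAt b)) := by rw [mul_assoc]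
      _ = XAt a * (ZAt a * (ZAt b * XAt b)) := by
          rw [← mul_assoc (ZAt b), (ZAt_commute b a).eq, mul_assoc]
      _ = XAt a * (ZAt a * -(XAt b * ZAt b)) := by rw [ZAt_mul_XAt_same b]
      _ = -(XAt a * (ZAt a * (XAt b * ZAt b))) := by rw [mul_neg, mul_neg]
  have hR : (ZAt a * XAt b) * (XAt a * ZAt b)
      = -(XAt a * (ZAt a * (XAt b * ZAt b))) := by
    calc (ZAt a * XAt b) * (XAt a * ZAt b)
        = ZAt a * (XAt b * (XAt a * ZAt b)) := by rw [mul_assoc]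
      _ = ZAt a * (XAt a * (XAt b * ZAt b)) := by
          rw [← mul_assoc (XAt b), (XAt_commute b a).eq, mul_assoc]
      _ = (ZAt a * XAt a) * (XAt b * ZAt b) := by rw [mul_assoc]
      _ = (-(XAt a * ZAt a)) * (XAt b * ZAt b) := by rw [ZAt_mul_XAt_same a]
      _ = -(XAt a * (ZAt a * (XAt b * ZAt b))) := by rw [neg_mul, mul_assoc]
  rw [hL, hR]

lemma one_add_smul_mul_comm {n : Type*} [Fintype n] [DecidableEq n]
    {A B : Matrix n n ℂ} (c : ℝ) (h : A * B = B * A) :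
    (1 + c • A) * (1 + c • B) = (1 + c • B) * (1 + c • A) := by
  simp only [add_mul, mul_add, one_mul, mul_one, smul_mul_assoc, mul_smul_comm, smul_add, h]
  abel

variable (G : SimpleGraph V) [DecidableRel G.Adj]

/-- The operator attached to the (oriented) bond `(u,v)` of the thermal
valence-bond-solid state:
`(1/4)(1 + ω X_{(u,v)} Z_{(v,u)})(1 + ω Z_{(u,v)} X_{(v,u)})`. -/
def bondAux (ω : Sym2 V → ℝ) (u v : V) :
    Matrix (G.Dart → Fin 2) (G.Dart → Fin 2) ℂ :=
  if h : G.Adj u v then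
    (4 : ℂ)⁻¹ • ((1 + ω s(u, v) • (XAt (⟨(u, v), h⟩ : G.Dart) * ZAt ⟨(v, u), h.symm⟩)) *
      (1 + ω s(u, v) • (ZAt (⟨(u, v), h⟩ : G.Dart) * XAt ⟨(v, u), h.symm⟩)))
  else 1

lemma bondAux_symm (ω : Sym2 V → ℝ) (u v : V) :
    bondAux G ω u v = bondAux G ω v u := by
  by_cases h : G.Adj u v
  · rw [bondAux, bondAux, dif_pos h, dif_pos h.symm,
      (Sym2.eq_swap : s(v, u) = s(u, v))]
    have hab : (⟨(u, v), h⟩ : G.Dart) ≠ ⟨(v, u), h.symm⟩ := by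
      intro hEq
      exact G.ne_of_adj h (congrArg (fun d : G.Dart => d.toProd.1) hEq)
    show (4 : ℂ)⁻¹ • ((1 + ω s(u, v) • (XAt (⟨(u, v), h⟩ : G.Dart) * ZAt ⟨(v, u), h.symm⟩)) *
        (1 + ω s(u, v) • (ZAt (⟨(u, v), h⟩ : G.Dart) * XAt ⟨(v, u), h.symm⟩)))
      = (4 : ℂ)⁻¹ • ((1 + ω s(u, v) • (XAt (⟨(v, u), h.symm⟩ : G.Dart) * ZAt ⟨(u, v), h⟩)) *
        (1 + ω s(u, v) • (ZAt (⟨(v, u), h.symm⟩ : G.Dart) * XAt ⟨(u, v), h⟩)))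
    rw [XAt_mul_ZAt_of_ne (Ne.symm hab), ← XAt_mul_ZAt_of_ne hab]
    rw [one_add_smul_mul_comm _ (XZ_ZX_commute hab)]
  · rw [bondAux, bondAux, dif_neg h, dif_neg fun h' => h h'.symm]

/-- The bond operator of an (unordered) edge of the graph. -/
def bond (ω : Sym2 V → ℝ) : Sym2 V → Matrix (G.Dart → Fin 2) (G.Dart → Fin 2) ℂ :=
  Sym2.lift ⟨bondAux G ω, bondAux_symm G ω⟩

/-- The isometry `W = ⨂_u W_u` mapping each physical qubit `u` to the
GHZ-type embedding on its domain of virtual qubits (darts emanating from `u`):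
`W(s, b) = 1` iff `s(u,v) = b(u)` for every dart `(u,v)`. -/
def Wvbs : Matrix (G.Dart → Fin 2) (V → Fin 2) ℂ :=
  Matrix.of fun s b => if ∀ d : G.Dart, s d = b d.toProd.1 then 1 else 0

/-- `η_u = ∏_{v ∈ N(u)} ω({u,v})`. -/
def eta (ω : Sym2 V → ℝ) (u : V) : ℝ :=
  ∏ v ∈ G.neighborFinset u, ω s(u, v)



/-! ### Auxiliary machinery -/

section AuxBasics

variable {V : Type*} [Fintype V] [DecidableEq V]

lemma fin2_eq_add_one_of_ne : ∀ (a b : Fin 2), a ≠ b → b = a + 1 := by decide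

lemma fin2_add_one_ne : ∀ a : Fin 2, a + 1 ≠ a := by decide

/-- `(-1)^x` as a complex number. -/
def csgn (x : Fin 2) : ℂ := if x = 1 then -1 else 1

/-- The local factor `(i if x ≠ y else 1) * (-1)^x`. -/
def cfac (x y : Fin 2) : ℂ := (if x = y then 1 else Complex.I) * csgn x

lemma csgn_add_one (x : Fin 2) : csgn (x + 1) = -csgn x := by
  rcases fin2_cases x with h | h <;> subst h <;> simp [csgn]

lemma cfac_self (x : Fin 2) : cfac x x = csgn x := by simp [cfac]

lemma cfac_of_ne {x y : Fin 2} (h : x ≠ y) : cfac x y = Complex.I * csgn x := by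
  simp [cfac, h]

lemma Zprod_eq_diagonal_s9 (S : Finset V) :
    Zprod S = Matrix.diagonal fun s => ∏ v ∈ S, csgn (s v) := by
  induction S using Finset.induction_on with
  | empty =>
      show Finset.noncommProd ∅ ZAt _ = _
      exact (Finset.noncommProd_empty _ _).trans (by simp [Matrix.diagonal_one])
  | @insert u S hu ih =>
      have h1 : Zprod (insert u S) = ZAt u * Zprod S :=
        Finset.noncommProd_insert_of_notMem S u ZAt _ hu
      rw [h1, ih, ZAt_eq_diagonal u, Matrix.diagonal_mul_diagonal]
      refine congrArg Matrix.diagonal (funext fun s => ?_)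
      rw [Finset.prod_insert hu]
      rfl

lemma K_apply (G : SimpleGraph V) [DecidableRel G.Adj] (u : V) (s t : V → Fin 2) :
    K G u s t = if t = flip u s then ∏ v ∈ G.neighborFinset u, csgn (s v) else 0 := by
  rw [K, XAt_mul_apply, Zprod_eq_diagonal_s9, Matrix.diagonal_apply]
  by_cases h : t = flip u s
  · rw [if_pos h.symm, if_pos h]
    refine Finset.prod_congr rfl fun v hv => ?_
    rw [flip_apply_ne u v s ((G.mem_neighborFinset u v).mp hv).ne']
  · rw [if_neg (fun hh => h hh.symm), if_neg h]

end AuxBasics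

section ClusterSide

variable {V : Type*} [Fintype V] [DecidableEq V]
variable (G : SimpleGraph V) [DecidableRel G.Adj] (ω : Sym2 V → ℝ)

lemma key_sign (s t : V → Fin 2) (u : V) (hne : s u ≠ t u) :
    (eta G ω u : ℂ) * (∏ v ∈ G.neighborFinset u, csgn (s v)) *
      ∏ w ∈ Finset.univ.filter fun w => flip u s w ≠ t w,
        ((eta G ω w : ℂ) * ∏ v ∈ G.neighborFinset w, cfac (flip u s v) (t v))
    = ∏ w ∈ Finset.univ.filter fun w => s w ≠ t w,
        ((eta G ω w : ℂ) * ∏ v ∈ G.neighborFinset w, cfac (s v) (t v)) := by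
  have htu : t u = s u + 1 := fin2_eq_add_one_of_ne _ _ hne
  set D : Finset V := Finset.univ.filter fun w => s w ≠ t w with hD
  have huD : u ∈ D := by simp [hD, hne]
  have hD' : (Finset.univ.filter fun w => flip u s w ≠ t w) = D.erase u := by
    ext w
    simp only [Finset.mem_filter, Finset.mem_univ, true_and, Finset.mem_erase, hD]
    constructor
    · intro hw
      rcases eq_or_ne w u with rfl | hwu
      · exact absurd (by rw [flip_apply_same, ← htu]) hw
      · exact ⟨hwu, by rwa [flip_apply_ne u w s hwu] at hw⟩
    · rintro ⟨hwu, hw⟩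
      rwa [flip_apply_ne u w s hwu]
  rw [hD', ← Finset.mul_prod_erase D _ huD]
  have hfw : ∀ w ∈ D.erase u,
      (eta G ω w : ℂ) * ∏ v ∈ G.neighborFinset w, cfac (s v) (t v)
        = (if w ∈ G.neighborFinset u then -Complex.I else 1) *
          ((eta G ω w : ℂ) * ∏ v ∈ G.neighborFinset w, cfac (flip u s v) (t v)) := by
    intro w hw
    by_cases hun : u ∈ G.neighborFinset w
    · have hwNu : w ∈ G.neighborFinset u := by
        rw [SimpleGraph.mem_neighborFinset] at hun ⊢
        exact hun.symm
      rw [if_pos hwNu, ← Finset.mul_prod_erase _ _ hun,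
        ← Finset.mul_prod_erase _ (fun v => cfac (flip u s v) (t v)) hun]
      have h2 : ∀ v ∈ (G.neighborFinset w).erase u,
          cfac (s v) (t v) = cfac (flip u s v) (t v) := fun v hv => by
        rw [flip_apply_ne u v s (Finset.mem_erase.mp hv).1]
      rw [Finset.prod_congr rfl h2]
      have hc1 : cfac (s u) (t u) = Complex.I * csgn (s u) := cfac_of_ne hne
      have hc2 : cfac (flip u s u) (t u) = -csgn (s u) := by
        rw [flip_apply_same, ← htu, cfac_self, htu, csgn_add_one]
      rw [hc1, hc2]
      ring
    · have hwNu : w ∉ G.neighborFinset u := by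
        rw [SimpleGraph.mem_neighborFinset] at hun ⊢
        exact fun h => hun h.symm
      rw [if_neg hwNu, one_mul]
      refine congrArg _ (Finset.prod_congr rfl fun v hv => ?_)
      rw [flip_apply_ne u v s (fun hvu => hun (hvu ▸ hv))]
  rw [Finset.prod_congr rfl hfw, Finset.prod_mul_distrib]
  have hkey : (∏ v ∈ G.neighborFinset u, csgn (s v))
      = (∏ v ∈ G.neighborFinset u, cfac (s v) (t v)) *
        ∏ w ∈ D.erase u, (if w ∈ G.neighborFinset u then -Complex.I else 1) := by
    have h3 : (∏ w ∈ D.erase u, (if w ∈ G.neighborFinset u then -Complex.I else 1))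
        = ∏ v ∈ G.neighborFinset u, (if v ∈ D.erase u then -Complex.I else 1) := by
      rw [Finset.prod_ite_mem, Finset.prod_ite_mem, Finset.inter_comm]
    rw [h3, ← Finset.prod_mul_distrib]
    refine (Finset.prod_congr rfl fun v hv => ?_).symm
    have hvu : v ≠ u := ((G.mem_neighborFinset u v).mp hv).ne'
    by_cases hst : s v = t v
    · have hnm : v ∉ D.erase u := by
        intro hmem
        rw [Finset.mem_erase, hD, Finset.mem_filter] at hmem
        exact hmem.2.2 hst
      rw [if_neg hnm, cfac, if_pos hst, one_mul, mul_one]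
    · rw [if_pos (Finset.mem_erase.mpr ⟨hvu, by simp [hD, hst]⟩), cfac_of_ne hst]
      have h4 : Complex.I * csgn (s v) * -Complex.I
          = -(Complex.I * Complex.I) * csgn (s v) := by ring
      rw [h4, Complex.I_mul_I]
      ring
  rw [hkey, Finset.prod_mul_distrib, Finset.prod_mul_distrib]
  ring

lemma clusterProd_apply (t : V → Fin 2) (U : Finset V)
    (hc : ∀ a ∈ U, ∀ b ∈ U,
      Commute ((1 : Matrix (V → Fin 2) (V → Fin 2) ℂ) + eta G ω a • K G a)
        (1 + eta G ω b • K G b)) (s : V → Fin 2) :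
    cprod U (fun u => (1 : Matrix (V → Fin 2) (V → Fin 2) ℂ) + eta G ω u • K G u) hc s t
      = if ∀ v, s v ≠ t v → v ∈ U then
          ∏ u ∈ Finset.univ.filter fun u => s u ≠ t u,
            ((eta G ω u : ℂ) * ∏ v ∈ G.neighborFinset u, cfac (s v) (t v))
        else 0 := by
  induction U using Finset.induction_on generalizing s with
  | empty =>
      rw [show cprod (∅ : Finset V)
          (fun u => (1 : Matrix (V → Fin 2) (V → Fin 2) ℂ) + eta G ω u • K G u) hc = 1 from
        Finset.noncommProd_empty _ _]
      by_cases hst : s = t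
      · subst hst
        rw [Matrix.one_apply_eq, if_pos (fun v hv => absurd rfl hv),
          show (Finset.univ.filter fun u => s u ≠ s u) = ∅ by simp, Finset.prod_empty]
      · obtain ⟨v, hv⟩ := Function.ne_iff.mp hst
        rw [Matrix.one_apply_ne hst,
          if_neg (fun hall => absurd (hall v hv) (Finset.notMem_empty v))]
  | @insert u U hu ih =>
      have hstep : cprod (insert u U)
            (fun u => (1 : Matrix (V → Fin 2) (V → Fin 2) ℂ) + eta G ω u • K G u) hc
          = (1 + eta G ω u • K G u) *
            cprod U (fun u => (1 : Matrix (V → Fin 2) (V → Fin 2) ℂ) + eta G ω u • K G u)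
              (fun a ha b hb => hc a (Finset.mem_insert_of_mem ha) b (Finset.mem_insert_of_mem hb)) :=
        Finset.noncommProd_insert_of_notMem U u _ _ hu
      rw [hstep, Matrix.add_mul, Matrix.one_mul, Matrix.add_apply, Matrix.smul_mul,
        Matrix.smul_apply, K, mul_assoc, XAt_mul_apply, Zprod_eq_diagonal_s9,
        Matrix.diagonal_mul, Complex.real_smul]
      have hcs : ∀ v ∈ G.neighborFinset u, csgn (flip u s v) = csgn (s v) := fun v hv => by
        rw [flip_apply_ne u v s ((G.mem_neighborFinset u v).mp hv).ne']
      rw [Finset.prod_congr rfl hcs, ih _ s, ih _ (flip u s)]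
      by_cases hsu : s u = t u
      · have hg1 : ¬ (∀ v, flip u s v ≠ t v → v ∈ U) := fun hall => by
          refine hu (hall u ?_)
          rw [flip_apply_same, ← hsu]
          exact fin2_add_one_ne (s u)
        rw [if_neg hg1, mul_zero, mul_zero, add_zero]
        have hgiff : (∀ v, s v ≠ t v → v ∈ U) = (∀ v, s v ≠ t v → v ∈ insert u U) := by
          refine propext ⟨fun hall v hv => Finset.mem_insert_of_mem (hall v hv), fun hall v hv => ?_⟩
          rcases Finset.mem_insert.mp (hall v hv) with rfl | h
          · exact absurd hsu hv
          · exact h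
        by_cases hg : ∀ v, s v ≠ t v → v ∈ insert u U
        · rw [if_pos ((iff_of_eq hgiff).mpr hg), if_pos hg]
        · rw [if_neg (fun hp => hg ((iff_of_eq hgiff).mp hp)), if_neg hg]
      · rw [if_neg (fun hall => hu (hall u hsu)), zero_add]
        have htu : t u = s u + 1 := fin2_eq_add_one_of_ne _ _ hsu
        have hgiff : (∀ v, flip u s v ≠ t v → v ∈ U) = (∀ v, s v ≠ t v → v ∈ insert u U) := by
          refine propext ⟨fun hall v hv => ?_, fun hall v hv => ?_⟩
          · rcases eq_or_ne v u with rfl | hvu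
            · exact Finset.mem_insert_self v U
            · exact Finset.mem_insert_of_mem (hall v (by rwa [flip_apply_ne u v s hvu]))
          · have hvu : v ≠ u := fun h => by
              subst h
              rw [flip_apply_same, ← htu] at hv
              exact hv rfl
            rw [flip_apply_ne u v s hvu] at hv
            rcases Finset.mem_insert.mp (hall v hv) with rfl | h
            · exact absurd rfl hvu
            · exact h
        by_cases hg : ∀ v, s v ≠ t v → v ∈ insert u U
        · rw [if_pos ((iff_of_eq hgiff).mpr hg), if_pos hg, ← mul_assoc]
          exact key_sign G ω s t u hsu
        · rw [if_neg (fun hp => hg ((iff_of_eq hgiff).mp hp)), if_neg hg, mul_zero, mul_zero]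

end ClusterSide

section BondSide

variable {W : Type*} [Fintype W] [DecidableEq W]

lemma XZ_apply {a c : W} (hac : a ≠ c) (s t : W → Fin 2) :
    (XAt a * ZAt c) s t = if t = flip a s then csgn (s c) else 0 := by
  rw [ZAt_eq_diagonal, Matrix.mul_diagonal, XAt_apply]
  by_cases ht : t = flip a s
  · rw [if_pos ht, if_pos ht, one_mul, ht, flip_apply_ne a c s (Ne.symm hac)]
    rfl
  · rw [if_neg ht, if_neg ht, zero_mul]

lemma ZX_apply {a c : W} (s t : W → Fin 2) :
    (ZAt a * XAt c) s t = if t = flip c s then csgn (s a) else 0 := by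
  rw [ZAt_eq_diagonal, Matrix.diagonal_mul, XAt_apply]
  by_cases ht : t = flip c s
  · rw [if_pos ht, if_pos ht, mul_one]
    rfl
  · rw [if_neg ht, if_neg ht, mul_zero]

lemma XZZX_apply {a c : W} (hac : a ≠ c) (s t : W → Fin 2) :
    ((XAt a * ZAt c) * (ZAt a * XAt c)) s t
      = if t = flip c (flip a s) then -(csgn (s a) * csgn (s c)) else 0 := by
  rw [Matrix.mul_apply, Finset.sum_eq_single (flip a s)]
  · rw [XZ_apply hac, ZX_apply, if_pos rfl, flip_apply_same, csgn_add_one]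
    by_cases ht : t = flip c (flip a s)
    · rw [if_pos ht, if_pos ht]
      ring
    · rw [if_neg ht, if_neg ht, mul_zero]
  · intro r _ hr
    rw [XZ_apply hac, if_neg hr, zero_mul]
  · intro hmem
    exact absurd (Finset.mem_univ _) hmem

end BondSide

section BondSide2

variable {V : Type*} [Fintype V] [DecidableEq V]
variable (G : SimpleGraph V) [DecidableRel G.Adj] (ω : Sym2 V → ℝ)

/-- The per-dart factor of the VBS bond product. -/
def bphi (s t : G.Dart → Fin 2) (d : G.Dart) : ℂ :=
  if s d = t d then 1 else (ω d.edge : ℂ) * cfac (s d.symm) (t d.symm)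

lemma dart_edge_eq_iff {u v : V} (h : G.Adj u v) (d : G.Dart) :
    d.edge = s(u, v) ↔ d = SimpleGraph.Dart.mk (u, v) h ∨ d = SimpleGraph.Dart.mk (v, u) h.symm := by
  constructor
  · intro hd
    have hd' : s(d.toProd.1, d.toProd.2) = s(u, v) := hd
    rcases Sym2.eq_iff.mp hd' with ⟨h1, h2⟩ | ⟨h1, h2⟩
    · exact Or.inl (SimpleGraph.Dart.ext _ _ (Prod.ext h1 h2))
    · exact Or.inr (SimpleGraph.Dart.ext _ _ (Prod.ext h1 h2))
  · rintro (rfl | rfl)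
    · rfl
    · exact Sym2.eq_swap

lemma dart_mk_ne {u v : V} (h : G.Adj u v) :
    SimpleGraph.Dart.mk (u, v) h ≠ SimpleGraph.Dart.mk (v, u) h.symm := by
  intro he
  exact h.ne (congrArg (fun d : G.Dart => d.toProd.1) he)

lemma filter_edge_eq {u v : V} (h : G.Adj u v) :
    (Finset.univ.filter fun d : G.Dart => d.edge = s(u, v))
      = {SimpleGraph.Dart.mk (u, v) h, SimpleGraph.Dart.mk (v, u) h.symm} := by
  ext d
  simp only [Finset.mem_filter, Finset.mem_univ, true_and, Finset.mem_insert,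
    Finset.mem_singleton]
  exact dart_edge_eq_iff G h d

lemma bond_apply_mk {u v : V} (h : G.Adj u v) (s t : G.Dart → Fin 2) :
    bond G ω s(u, v) s t
      = if ∀ d : G.Dart, s d ≠ t d → d.edge = s(u, v) then
          (4 : ℂ)⁻¹ * bphi G ω s t (SimpleGraph.Dart.mk (u, v) h) *
            bphi G ω s t (SimpleGraph.Dart.mk (v, u) h.symm)
        else 0 := by
  set a := SimpleGraph.Dart.mk (u, v) h with ha
  set c := SimpleGraph.Dart.mk (v, u) h.symm with hc
  have hac : a ≠ c := dart_mk_ne G h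
  have hcs : c.symm = a := rfl
  have has : a.symm = c := rfl
  have hae : a.edge = s(u, v) := rfl
  have hce : c.edge = s(u, v) := Sym2.eq_swap
  have hbond : bond G ω s(u, v)
      = (4 : ℂ)⁻¹ • ((1 + ω s(u, v) • (XAt a * ZAt c)) * (1 + ω s(u, v) • (ZAt a * XAt c))) := by
    show bondAux G ω u v = _
    rw [bondAux, dif_pos h]
  have hexp : (1 + ω s(u, v) • (XAt a * ZAt c)) * (1 + ω s(u, v) • (ZAt a * XAt c))
      = 1 + ω s(u, v) • (XAt a * ZAt c) + ω s(u, v) • (ZAt a * XAt c)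
        + (ω s(u, v) * ω s(u, v)) • ((XAt a * ZAt c) * (ZAt a * XAt c)) := by
    simp only [add_mul, mul_add, one_mul, mul_one, smul_mul_assoc, mul_smul_comm,
      smul_smul, smul_add]
    abel
  rw [hbond, hexp, Matrix.smul_apply, Matrix.add_apply, Matrix.add_apply, Matrix.add_apply,
    Matrix.smul_apply, Matrix.smul_apply, Matrix.smul_apply, Matrix.one_apply,
    XZ_apply hac, ZX_apply, XZZX_apply hac, smul_eq_mul, Complex.real_smul,
    Complex.real_smul, Complex.real_smul, Complex.ofReal_mul]
  by_cases hout : ∀ d : G.Dart, d ≠ a → d ≠ c → s d = t d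
  · have hg : ∀ d : G.Dart, s d ≠ t d → d.edge = s(u, v) := by
      intro d hd
      rcases eq_or_ne d a with rfl | hda
      · exact hae
      rcases eq_or_ne d c with rfl | hdc
      · exact hce
      · exact absurd (hout d hda hdc) hd
    rw [if_pos hg]
    by_cases hsa : s a = t a <;> by_cases hsc : s c = t c
    · -- t = s
      have hP0 : s = t := funext fun d => by
        rcases eq_or_ne d a with rfl | hda
        · exact hsa
        rcases eq_or_ne d c with rfl | hdc
        · exact hsc
        · exact hout d hda hdc
      have hP1 : ¬ t = flip a s := fun hP =>
        fin2_add_one_ne (s a) ((hsa.trans ((congrFun hP a).trans (flip_apply_same a s))).symm)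
      have hP2 : ¬ t = flip c s := fun hP =>
        fin2_add_one_ne (s c) ((hsc.trans ((congrFun hP c).trans (flip_apply_same c s))).symm)
      have hP3 : ¬ t = flip c (flip a s) := fun hP => by
        have : t a = s a + 1 := by
          rw [hP, flip_apply_ne c a _ hac, flip_apply_same]
        exact fin2_add_one_ne (s a) ((hsa.trans this).symm)
      rw [if_pos hP0, if_neg hP1, if_neg hP2, if_neg hP3]
      simp only [bphi, if_pos hsa, if_pos hsc]
      ring
    · -- t = flip c s
      have hP2 : t = flip c s := (funext fun d => by
        rcases eq_or_ne d c with rfl | hdc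
        · rw [flip_apply_same, ← fin2_eq_add_one_of_ne _ _ hsc]
        rcases eq_or_ne d a with rfl | hda
        · rw [flip_apply_ne c a _ hac, hsa]
        · rw [flip_apply_ne c d _ hdc, hout d hda hdc]).symm
      have hP0 : ¬ s = t := fun hP => hsc (congrFun hP c)
      have hP1 : ¬ t = flip a s := fun hP =>
        fin2_add_one_ne (s a) ((hsa.trans ((congrFun hP a).trans (flip_apply_same a s))).symm)
      have hP3 : ¬ t = flip c (flip a s) := fun hP => by
        have : t a = s a + 1 := by
          rw [hP, flip_apply_ne c a _ hac, flip_apply_same]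
        exact fin2_add_one_ne (s a) ((hsa.trans this).symm)
      rw [if_neg hP0, if_neg hP1, if_pos hP2, if_neg hP3]
      simp only [bphi, if_pos hsa, if_neg hsc, hcs, hce]
      rw [hP2, flip_apply_ne c a _ hac, cfac_self]
      ring
    · -- t = flip a s
      have hP1 : t = flip a s := (funext fun d => by
        rcases eq_or_ne d a with rfl | hda
        · rw [flip_apply_same, ← fin2_eq_add_one_of_ne _ _ hsa]
        rcases eq_or_ne d c with rfl | hdc
        · rw [flip_apply_ne a c _ (Ne.symm hac), hsc]
        · rw [flip_apply_ne a d _ hda, hout d hda hdc]).symm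
      have hP0 : ¬ s = t := fun hP => hsa (congrFun hP a)
      have hP2 : ¬ t = flip c s := fun hP =>
        fin2_add_one_ne (s c) ((hsc.trans ((congrFun hP c).trans (flip_apply_same c s))).symm)
      have hP3 : ¬ t = flip c (flip a s) := fun hP => by
        have : t c = s c + 1 := by
          rw [hP, flip_apply_same, flip_apply_ne a c _ (Ne.symm hac)]
        exact fin2_add_one_ne (s c) ((hsc.trans this).symm)
      rw [if_neg hP0, if_pos hP1, if_neg hP2, if_neg hP3]
      simp only [bphi, if_neg hsa, if_pos hsc, has, hae]
      rw [hP1, flip_apply_ne a c _ (Ne.symm hac), cfac_self]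
      ring
    · -- t = flip c (flip a s)
      have hP3 : t = flip c (flip a s) := (funext fun d => by
        rcases eq_or_ne d a with rfl | hda
        · rw [flip_apply_ne c a _ hac, flip_apply_same, ← fin2_eq_add_one_of_ne _ _ hsa]
        rcases eq_or_ne d c with rfl | hdc
        · rw [flip_apply_same, flip_apply_ne a c _ (Ne.symm hac),
            ← fin2_eq_add_one_of_ne _ _ hsc]
        · rw [flip_apply_ne c d _ hdc, flip_apply_ne a d _ hda, hout d hda hdc]).symm
      have hP0 : ¬ s = t := fun hP => hsa (congrFun hP a)
      have hP1 : ¬ t = flip a s := fun hP => by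
        have : t c = s c := by rw [hP, flip_apply_ne a c _ (Ne.symm hac)]
        exact hsc this.symm
      have hP2 : ¬ t = flip c s := fun hP => by
        have : t a = s a := by rw [hP, flip_apply_ne c a _ hac]
        exact hsa this.symm
      rw [if_neg hP0, if_neg hP1, if_neg hP2, if_pos hP3]
      simp only [bphi, if_neg hsa, if_neg hsc, has, hcs, hae, hce]
      rw [cfac_of_ne hsa, cfac_of_ne hsc]
      have hII : Complex.I * Complex.I = -1 := Complex.I_mul_I
      linear_combination (-(4:ℂ)⁻¹ * (ω s(u,v) : ℂ) * (ω s(u,v) : ℂ) *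
        csgn (s a) * csgn (s c)) * hII
  · push_neg at hout
    obtain ⟨d, hda, hdc, hsd⟩ := hout
    have hg : ¬ ∀ d : G.Dart, s d ≠ t d → d.edge = s(u, v) := fun hall => by
      rcases (dart_edge_eq_iff G h d).mp (hall d hsd) with rfl | rfl
      · exact hda rfl
      · exact hdc rfl
    have hP0 : ¬ s = t := fun hP => hsd (congrFun hP d)
    have hP1 : ¬ t = flip a s := fun hP => hsd ((congrFun hP d).trans (flip_apply_ne a d _ hda)).symm
    have hP2 : ¬ t = flip c s := fun hP => hsd ((congrFun hP d).trans (flip_apply_ne c d _ hdc)).symm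
    have hP3 : ¬ t = flip c (flip a s) := fun hP => hsd
      ((congrFun hP d).trans ((flip_apply_ne c d _ hdc).trans (flip_apply_ne a d _ hda))).symm
    rw [if_neg hP0, if_neg hP1, if_neg hP2, if_neg hP3, if_neg hg]
    ring

end BondSide2

section BondProd

variable {V : Type*} [Fintype V] [DecidableEq V]
variable (G : SimpleGraph V) [DecidableRel G.Adj] (ω : Sym2 V → ℝ)

lemma bond_apply' (e : Sym2 V) (he : e ∈ G.edgeFinset) (s t : G.Dart → Fin 2) :
    bond G ω e s t
      = if ∀ d : G.Dart, s d ≠ t d → d.edge = e then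
          (4 : ℂ)⁻¹ * ∏ d ∈ Finset.univ.filter fun d : G.Dart => d.edge = e, bphi G ω s t d
        else 0 := by
  revert he
  induction e using Sym2.ind with
  | _ u v =>
    intro he
    have h : G.Adj u v := by simpa using he
    rw [bond_apply_mk G ω h, filter_edge_eq G h]
    by_cases hg : ∀ d : G.Dart, s d ≠ t d → d.edge = s(u, v)
    · rw [if_pos hg, if_pos hg,
        Finset.prod_insert (Finset.notMem_singleton.mpr (dart_mk_ne G h)),
        Finset.prod_singleton, mul_assoc]
    · rw [if_neg hg, if_neg hg]

lemma bondProd_apply (E' : Finset (Sym2 V)) (hE' : E' ⊆ G.edgeFinset)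
    (hc : ∀ a ∈ E', ∀ b ∈ E', Commute (bond G ω a) (bond G ω b))
    (s t : G.Dart → Fin 2) :
    cprod E' (bond G ω) hc s t
      = if ∀ d : G.Dart, s d ≠ t d → d.edge ∈ E' then
          ((4 : ℂ)⁻¹) ^ E'.card *
            ∏ d ∈ Finset.univ.filter fun d : G.Dart => d.edge ∈ E', bphi G ω s t d
        else 0 := by
  induction E' using Finset.induction_on generalizing s with
  | empty =>
      rw [show cprod (∅ : Finset (Sym2 V)) (bond G ω) hc = 1 from Finset.noncommProd_empty _ _]
      by_cases hst : s = t
      · subst hst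
        rw [Matrix.one_apply_eq, if_pos (fun d hd => absurd rfl hd),
          show (Finset.univ.filter fun d : G.Dart => d.edge ∈ (∅ : Finset (Sym2 V))) = ∅ by simp,
          Finset.prod_empty, Finset.card_empty, pow_zero, mul_one]
      · obtain ⟨d, hd⟩ := Function.ne_iff.mp hst
        rw [Matrix.one_apply_ne hst,
          if_neg (fun hall => absurd (hall d hd) (Finset.notMem_empty _))]
  | @insert e E' he ih =>
      have heG : e ∈ G.edgeFinset := hE' (Finset.mem_insert_self e E')
      have hE'' : E' ⊆ G.edgeFinset := fun x hx => hE' (Finset.mem_insert_of_mem hx)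
      have hstep : cprod (insert e E') (bond G ω) hc
          = bond G ω e * cprod E' (bond G ω)
              (fun a ha b hb =>
                hc a (Finset.mem_insert_of_mem ha) b (Finset.mem_insert_of_mem hb)) :=
        Finset.noncommProd_insert_of_notMem E' e _ _ he
      rw [hstep, Matrix.mul_apply]
      set r₀ : G.Dart → Fin 2 := fun d => if d.edge = e then t d else s d with hr₀def
      have hr₀t : ∀ d : G.Dart, d.edge = e → r₀ d = t d := fun d hd => if_pos hd
      have hr₀s : ∀ d : G.Dart, d.edge ≠ e → r₀ d = s d := fun d hd => if_neg hd
      rw [Finset.sum_eq_single r₀]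
      · have hg1 : ∀ d : G.Dart, s d ≠ r₀ d → d.edge = e := by
          intro d hd
          by_contra hne
          exact hd (hr₀s d hne).symm
        rw [bond_apply' G ω e heG s r₀, if_pos hg1, ih hE''
          (fun a ha b hb => hc a (Finset.mem_insert_of_mem ha) b (Finset.mem_insert_of_mem hb)) r₀]
        have hGiff : (∀ d : G.Dart, r₀ d ≠ t d → d.edge ∈ E')
            ↔ (∀ d : G.Dart, s d ≠ t d → d.edge ∈ insert e E') := by
          constructor
          · intro hall d hd
            by_cases hde : d.edge = e
            · rw [hde]
              exact Finset.mem_insert_self e E'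
            · exact Finset.mem_insert_of_mem (hall d (by rwa [hr₀s d hde]))
          · intro hall d hd
            have hde : d.edge ≠ e := fun hh => hd (hr₀t d hh)
            rw [hr₀s d hde] at hd
            rcases Finset.mem_insert.mp (hall d hd) with hh | hh
            · exact absurd hh hde
            · exact hh
        by_cases hG : ∀ d : G.Dart, s d ≠ t d → d.edge ∈ insert e E'
        · rw [if_pos (hGiff.mpr hG), if_pos hG]
          have hp1 : ∏ d ∈ Finset.univ.filter (fun d : G.Dart => d.edge = e),
              bphi G ω s r₀ d
              = ∏ d ∈ Finset.univ.filter (fun d : G.Dart => d.edge = e), bphi G ω s t d := by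
            refine Finset.prod_congr rfl fun d hd => ?_
            have hde : d.edge = e := (Finset.mem_filter.mp hd).2
            simp only [bphi]
            rw [hr₀t d hde, hr₀t d.symm (by rw [SimpleGraph.Dart.edge_symm, hde])]
          have hp2 : ∏ d ∈ Finset.univ.filter (fun d : G.Dart => d.edge ∈ E'),
              bphi G ω r₀ t d
              = ∏ d ∈ Finset.univ.filter (fun d : G.Dart => d.edge ∈ E'), bphi G ω s t d := by
            refine Finset.prod_congr rfl fun d hd => ?_
            have hde : d.edge ∈ E' := (Finset.mem_filter.mp hd).2
            have hdne : d.edge ≠ e := fun hh => he (hh ▸ hde)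
            simp only [bphi]
            rw [hr₀s d hdne, hr₀s d.symm (by rw [SimpleGraph.Dart.edge_symm]; exact hdne)]
          have hsplit : (Finset.univ.filter fun d : G.Dart => d.edge ∈ insert e E')
              = (Finset.univ.filter fun d : G.Dart => d.edge = e)
                ∪ (Finset.univ.filter fun d : G.Dart => d.edge ∈ E') := by
            ext d
            simp [Finset.mem_insert]
          have hdisj : Disjoint (Finset.univ.filter fun d : G.Dart => d.edge = e)
              (Finset.univ.filter fun d : G.Dart => d.edge ∈ E') :=
            Finset.disjoint_left.mpr fun d hd1 hd2 => he
              ((Finset.mem_filter.mp hd1).2 ▸ (Finset.mem_filter.mp hd2).2)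
          rw [hp1, hp2, hsplit, Finset.prod_union hdisj,
            Finset.card_insert_of_notMem he, pow_succ]
          ring
        · rw [if_neg (fun hp => hG (hGiff.mp hp)), if_neg hG, mul_zero]
      · intro r _ hr
        by_cases hb : ∀ d : G.Dart, s d ≠ r d → d.edge = e
        · have hne_r : ¬ ∀ d : G.Dart, r d ≠ t d → d.edge ∈ E' := fun hall =>
            hr (funext fun d => by
              by_cases hde : d.edge = e
              · by_cases hrd : r d = t d
                · rw [hrd, hr₀t d hde]
                · exact absurd (hde ▸ hall d hrd) he
              · have hsr : s d = r d := by
                  by_contra hsr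
                  exact hde (hb d hsr)
                rw [hr₀s d hde]
                exact hsr.symm)
          rw [ih hE''
            (fun a ha b hb => hc a (Finset.mem_insert_of_mem ha) b (Finset.mem_insert_of_mem hb)) r,
            if_neg hne_r, mul_zero]
        · rw [bond_apply' G ω e heG s r, if_neg hb, zero_mul]
      · intro hmem
        exact absurd (Finset.mem_univ _) hmem

end BondProd

section Assembly

variable {V : Type*} [Fintype V] [DecidableEq V]
variable (G : SimpleGraph V) [DecidableRel G.Adj]

lemma Wvbs_apply_eq (s : G.Dart → Fin 2) (b : V → Fin 2) :
    Wvbs G s b = if s = (fun d : G.Dart => b d.toProd.1) then 1 else 0 := by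
  simp only [Wvbs, Matrix.of_apply]
  exact if_congr funext_iff.symm rfl rfl

lemma Wvbs_conj_apply (A : Matrix (G.Dart → Fin 2) (G.Dart → Fin 2) ℂ) (b b' : V → Fin 2) :
    ((Wvbs G)ᴴ * A * Wvbs G) b b'
      = A (fun d : G.Dart => b d.toProd.1) (fun d : G.Dart => b' d.toProd.1) := by
  rw [Matrix.mul_apply, Finset.sum_eq_single (fun d : G.Dart => b' d.toProd.1)]
  · rw [Wvbs_apply_eq, if_pos rfl, mul_one, Matrix.mul_apply,
      Finset.sum_eq_single (fun d : G.Dart => b d.toProd.1)]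
    · rw [Matrix.conjTranspose_apply, Wvbs_apply_eq, if_pos rfl]
      simp
    · intro r _ hr
      rw [Matrix.conjTranspose_apply, Wvbs_apply_eq, if_neg hr]
      simp
    · intro hmem
      exact absurd (Finset.mem_univ _) hmem
  · intro r _ hr
    rw [Wvbs_apply_eq, if_neg hr, mul_zero]
  · intro hmem
    exact absurd (Finset.mem_univ _) hmem

/-- Darts are pairs of a vertex and a neighbor. -/
def dartEquiv : G.Dart ≃ Σ u : V, {v // v ∈ G.neighborFinset u} where
  toFun d := ⟨d.toProd.1, d.toProd.2, (G.mem_neighborFinset _ _).mpr d.adj⟩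
  invFun p := ⟨(p.1, p.2.1), (G.mem_neighborFinset _ _).mp p.2.2⟩
  left_inv d := rfl
  right_inv p := rfl

lemma prod_darts (F : V → V → ℂ) :
    (∏ d : G.Dart, F d.toProd.1 d.toProd.2) = ∏ u : V, ∏ v ∈ G.neighborFinset u, F u v := by
  rw [← Equiv.prod_comp (dartEquiv G).symm (fun d : G.Dart => F d.toProd.1 d.toProd.2),
    ← Finset.univ_sigma_univ, Finset.prod_sigma]
  exact Finset.prod_congr rfl fun u _ => Finset.prod_coe_sort (G.neighborFinset u) (fun v => F u v)

end Assembly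
/-- the thermal VBS state is converted into the (unnormalized)
thermal cluster state by the domain-wise isometry `W`:
`Wᴴ ρ_VBS W = 4^{−|E|} ∏_u (1 + η_u K_u)` with `η_u = ∏_{v ∈ N(u)} ω({u,v})`. -/
theorem Wvbs_conj_VBS_eq_thermal_cluster
    {V : Type*} [Fintype V] [DecidableEq V]
    (G : SimpleGraph V) [DecidableRel G.Adj] (ω : Sym2 V → ℝ)
    (hE : ∀ e ∈ G.edgeFinset, ∀ e' ∈ G.edgeFinset, Commute (bond G ω e) (bond G ω e'))
    (hK : ∀ u w : V,
      Commute ((1 : Matrix (V → Fin 2) (V → Fin 2) ℂ) + eta G ω u • K G u)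
        (1 + eta G ω w • K G w)) :
    (Wvbs G)ᴴ * cprod G.edgeFinset (bond G ω) hE * Wvbs G
      = ((4 : ℂ) ^ G.edgeFinset.card)⁻¹ •
          cprod Finset.univ (fun u => 1 + eta G ω u • K G u)
            (fun u _ w _ => hK u w) := by
  funext b b'
  rw [Matrix.smul_apply, Wvbs_conj_apply, bondProd_apply G ω G.edgeFinset le_rfl hE,
    clusterProd_apply G ω b' Finset.univ (fun u _ w _ => hK u w) b,
    if_pos (fun (d : G.Dart) _ => SimpleGraph.mem_edgeFinset.mpr d.edge_mem),
    if_pos (fun v _ => Finset.mem_univ v), smul_eq_mul, ← inv_pow,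
    Finset.filter_true_of_mem
      (fun (d : G.Dart) _ => SimpleGraph.mem_edgeFinset.mpr d.edge_mem)]
  congr 1
  have hstep1 : (∏ d : G.Dart, bphi G ω (fun d : G.Dart => b d.toProd.1)
        (fun d : G.Dart => b' d.toProd.1) d)
      = ∏ u : V, ∏ v ∈ G.neighborFinset u,
          (if b u = b' u then 1 else ((ω s(u, v) : ℝ) : ℂ) * cfac (b v) (b' v)) := by
    rw [← prod_darts G
      (fun u v => if b u = b' u then 1 else ((ω s(u, v) : ℝ) : ℂ) * cfac (b v) (b' v))]
    exact Finset.prod_congr rfl fun d _ => rfl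
  rw [hstep1]
  have hstep2 : ∀ u : V, (∏ v ∈ G.neighborFinset u,
        if b u = b' u then 1 else ((ω s(u, v) : ℝ) : ℂ) * cfac (b v) (b' v))
      = if b u ≠ b' u then
          ((eta G ω u : ℝ) : ℂ) * ∏ v ∈ G.neighborFinset u, cfac (b v) (b' v)
        else 1 := by
    intro u
    by_cases hbu : b u = b' u
    · simp [hbu]
    · rw [if_pos hbu]
      simp only [if_neg hbu]
      rw [Finset.prod_mul_distrib, eta, Complex.ofReal_prod]
  rw [Finset.prod_congr rfl (fun u _ => hstep2 u), ← Finset.prod_filter]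

end ClusterState
end
end
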